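/- Let n, m, r be positive natural numbers. Let M ∈ ℂ^{n×r} with M* M = I_r, V ∈ ℂ^{m×r} with V* V = I_r, and Σ ∈ ℂ^{r×r} invertible, and set X = M Σ V* (a thin singular value decomposition of the n×m matrix X). Let Y ∈ ℂ^{n×m}, and define the DMD operator F = Y V Σ⁻¹ M* (an n×n matrix). Then for every n×n complex matrix K, ‖Y − F X‖_F ≤ ‖Y − K X‖_F, where ‖·‖_F is the Frobenius norm. That is, the DMD operator F = Y X† solves the least-squares problem argmin_K ‖Y − K X‖_F. -/

import Mathlib

open scoped Matrix

/-- The Frobenius norm of a complex matrix. -/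
noncomputable def frobNorm {n m : ℕ} (B : Matrix (Fin n) (Fin m) ℂ) : ℝ :=
  Real.sqrt (∑ i, ∑ j, ‖B i j‖ ^ 2)

/-- Given a thin SVD `X = M Σ V*`, the DMD operator `F = Y V Σ⁻¹ M* = Y X†`
minimizes `‖Y - K X‖_F` over all `n × n` matrices `K`. -/
theorem dmd_least_squares {n m r : ℕ} (hn : 0 < n) (hm : 0 < m) (hr : 0 < r)
    (M : Matrix (Fin n) (Fin r) ℂ) (hM : Mᴴ * M = 1)
    (V : Matrix (Fin m) (Fin r) ℂ) (hV : Vᴴ * V = 1)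
    (S : Matrix (Fin r) (Fin r) ℂ) (hS : IsUnit S)
    (X : Matrix (Fin n) (Fin m) ℂ) (hX : X = M * S * Vᴴ)
    (Y : Matrix (Fin n) (Fin m) ℂ)
    (F : Matrix (Fin n) (Fin n) ℂ) (hF : F = Y * V * S⁻¹ * Mᴴ) :
    ∀ K : Matrix (Fin n) (Fin n) ℂ,
      frobNorm (Y - F * X) ≤ frobNorm (Y - K * X) := by
  intro K
  have hSinv : S⁻¹ * S = 1 :=
    Matrix.nonsing_inv_mul S ((Matrix.isUnit_iff_isUnit_det S).mp hS)
  -- F * X = Y * V * Vᴴ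
  have hFX : F * X = Y * V * Vᴴ := by
    rw [hF, hX]
    calc Y * V * S⁻¹ * Mᴴ * (M * S * Vᴴ)
        = Y * V * (S⁻¹ * ((Mᴴ * M) * S)) * Vᴴ := by
          simp only [Matrix.mul_assoc]
      _ = Y * V * Vᴴ := by rw [hM, one_mul, hSinv, Matrix.mul_one]
  set C := Y - F * X with hC
  set D := (F - K) * X with hD
  have hsplit : Y - K * X = C + D := by
    simp [hC, hD, Matrix.sub_mul]
  -- orthogonality: C * Dᴴ = 0
  have hCV : C * V = 0 := by
    rw [hC, hFX, Matrix.sub_mul, Matrix.mul_assoc (Y * V) Vᴴ V, hV, Matrix.mul_one,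
      sub_self]
  have hCD : C * Dᴴ = 0 := by
    have hXH : Xᴴ = V * (Sᴴ * Mᴴ) := by
      rw [hX]; simp [Matrix.conjTranspose_mul, Matrix.mul_assoc]
    rw [hD, Matrix.conjTranspose_mul, hXH, ← Matrix.mul_assoc, ← Matrix.mul_assoc, hCV,
      Matrix.zero_mul, Matrix.zero_mul]
  -- trace of C * Dᴴ is zero
  have htr : (∑ i, ∑ j, C i j * (starRingEnd ℂ) (D i j)) = 0 := by
    have : ∀ i, ∑ j, C i j * (starRingEnd ℂ) (D i j) = (C * Dᴴ) i i := by
      intro i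
      simp [Matrix.mul_apply, Matrix.conjTranspose_apply]
    simp only [this, hCD]
    simp
  -- Pythagorean expansion
  have hexpand : (∑ i, ∑ j, ‖(C + D) i j‖ ^ 2)
      = (∑ i, ∑ j, ‖C i j‖ ^ 2) + (∑ i, ∑ j, ‖D i j‖ ^ 2)
        + 2 * (∑ i, ∑ j, C i j * (starRingEnd ℂ) (D i j)).re := by
    have key : ∀ (a b : ℂ), ‖a + b‖ ^ 2 = ‖a‖ ^ 2 + ‖b‖ ^ 2 + 2 * (a * (starRingEnd ℂ) b).re := by
      intro a b
      rw [Complex.sq_norm, Complex.sq_norm, Complex.sq_norm, Complex.normSq_add]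
      try ring
    simp only [Matrix.add_apply, key, Finset.sum_add_distrib, Complex.re_sum,
      Finset.mul_sum]
    try ring
  have hle : (∑ i, ∑ j, ‖C i j‖ ^ 2) ≤ ∑ i, ∑ j, ‖(C + D) i j‖ ^ 2 := by
    rw [hexpand, htr]
    have : (0:ℝ) ≤ ∑ i, ∑ j, ‖D i j‖ ^ 2 :=
      Finset.sum_nonneg fun i _ => Finset.sum_nonneg fun j _ => sq_nonneg _
    simp only [Complex.zero_re, mul_zero, add_zero]
    linarith
  rw [hsplit]
  exact Real.sqrt_le_sqrt hle
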